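/- Let D be a (2,2) digraph whose CCE graph G contains a cycle C of length m ≥ 3. Then |N⁺(C) ∪ N⁻(C)| ≥ m + 3 and |N⁺(C) ∩ N⁻(C)| ≤ m − 3, where N⁺(C) (resp. N⁻(C)) is the set of vertices outside C that are out-neighbors (resp. in-neighbors) in D of some vertex of C. -/

import Mathlib

open SimpleGraph

/-- A simple digraph given by its arc relation `A` has no loops, and every vertex has
outdegree at most 2 and indegree at most 2. -/
def IsTwoTwo {V : Type*} (A : V → V → Prop) : Prop :=
  (∀ v, ¬ A v v) ∧
  (∀ v a b c, A v a → A v b → A v c → a = b ∨ a = c ∨ b = c) ∧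
  (∀ v a b c, A a v → A b v → A c v → a = b ∨ a = c ∨ b = c)

/-- The competition-common enemy graph of a digraph with arc relation `A`. -/
def CCE {V : Type*} (A : V → V → Prop) : SimpleGraph V where
  Adj u v := u ≠ v ∧ (∃ x, A u x ∧ A v x) ∧ (∃ y, A y u ∧ A y v)
  symm := by
    refine ⟨?_⟩
    rintro u v ⟨h, ⟨x, hx1, hx2⟩, ⟨y, hy1, hy2⟩⟩
    exact ⟨h.symm, ⟨x, hx2, hx1⟩, ⟨y, hy2, hy1⟩⟩
  loopless := ⟨fun v h => h.1 rfl⟩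

/-- The connected component `c` of `G` induces a (finite) path graph. -/
def IsPathComponent {V : Type*} (G : SimpleGraph V) (c : G.ConnectedComponent) : Prop :=
  ∃ n : ℕ, Nonempty ((G.induce c.supp) ≃g pathGraph n)

/-- The connected component `c` of `G` induces a cycle of length at least 3. -/
def IsCycleComponent {V : Type*} (G : SimpleGraph V) (c : G.ConnectedComponent) : Prop :=
  ∃ n : ℕ, 3 ≤ n ∧ Nonempty ((G.induce c.supp) ≃g cycleGraph n)

/-- `G` is the CCE graph of some `⟨2,2⟩` digraph. -/
def IsTwoTwoCCE {V : Type*} (G : SimpleGraph V) : Prop :=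
  ∃ (W : Type) (A : W → W → Prop), IsTwoTwo A ∧ Nonempty (G ≃g CCE A)

/-- `A` is acyclic: it has no directed cycle. -/
def DigraphAcyclic {V : Type*} (A : V → V → Prop) : Prop :=
  ∀ v, ¬ Relation.TransGen A v v

/-- A `(2,2)` digraph: an acyclic `⟨2,2⟩` digraph. -/
def IsTwoTwoAcyclic {V : Type*} (A : V → V → Prop) : Prop :=
  IsTwoTwo A ∧ DigraphAcyclic A

/-- `G` is an interval graph. -/
def IsIntervalGraph {V : Type*} (G : SimpleGraph V) : Prop :=
  ∃ f : V → Set ℝ, (∀ v, ∃ a b : ℝ, f v = Set.Icc a b) ∧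
    ∀ u v, u ≠ v → (G.Adj u v ↔ (f u ∩ f v).Nonempty)

/-- `A` is a minimal `(2,2)` digraph realizing its CCE graph: no proper subdigraph on the
same vertex set has the same CCE graph. -/
def MinimalTwoTwoAcyclic {V : Type*} (A : V → V → Prop) : Prop :=
  IsTwoTwoAcyclic A ∧
    ∀ A' : V → V → Prop, (∀ u v, A' u v → A u v) → CCE A' = CCE A → ∀ u v, A u v → A' u v

section AuxProofs

lemma getVert_support_get {V : Type*} {G : SimpleGraph V} {a b : V} (p : G.Walk a b) :
    ∀ (n : ℕ) (hn : n < p.support.length), p.support.get ⟨n, hn⟩ = p.getVert n := by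
  induction p with
  | nil =>
    intro n hn
    simp only [SimpleGraph.Walk.support_nil, List.length_singleton] at hn
    interval_cases n
    simp
  | cons h q ih =>
    intro n hn
    cases n with
    | zero => simp [SimpleGraph.Walk.support_cons]
    | succ k =>
      simp only [SimpleGraph.Walk.support_cons, List.get_cons_succ,
        SimpleGraph.Walk.getVert_cons_succ]
      exact ih k _

lemma cycle_getVert_inj {V : Type*} {G : SimpleGraph V} {a : V} {c : G.Walk a a}
    (hc : c.IsCycle) {i j : ℕ} (hi : i < c.length) (hj : j < c.length)
    (hij : c.getVert i = c.getVert j) : i = j := by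
  have hnd := hc.support_nodup
  have hlen : c.support.length = c.length + 1 := SimpleGraph.Walk.length_support c
  have htl : c.support.tail.length = c.length := by
    rw [List.length_tail, hlen]; omega
  -- tail.get n = support.get (n+1)
  have htg : ∀ (n : ℕ) (hn : n < c.support.tail.length),
      c.support.tail.get ⟨n, hn⟩ = c.getVert (n + 1) := by
    intro n hn
    have h1 : n + 1 < c.support.length := by omega
    rw [← getVert_support_get c (n+1) h1]
    rw [List.get_tail]
  -- getVert k for 1 ≤ k ≤ length is tail.get (k-1)
  have key : ∀ (k : ℕ), 1 ≤ k → k ≤ c.length → ∀ (l : ℕ), 1 ≤ l → l ≤ c.length →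
      c.getVert k = c.getVert l → k = l := by
    intro k hk1 hk2 l hl1 hl2 heq
    have hk' : k - 1 < c.support.tail.length := by omega
    have hl' : l - 1 < c.support.tail.length := by omega
    have e1 : c.support.tail.get ⟨k-1, hk'⟩ = c.getVert k := by
      rw [htg]; congr 1; omega
    have e2 : c.support.tail.get ⟨l-1, hl'⟩ = c.getVert l := by
      rw [htg]; congr 1; omega
    have h3 : c.support.tail.get ⟨k-1, hk'⟩ = c.support.tail.get ⟨l-1, hl'⟩ := by
      rw [e1, e2, heq]
    have h5 : k - 1 = l - 1 := congrArg Fin.val ((List.Nodup.get_inj_iff hnd).mp h3)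
    omega
  rcases Nat.eq_zero_or_pos i with hi0 | hip
  · rcases Nat.eq_zero_or_pos j with hj0 | hjp
    · omega
    · subst hi0
      have : c.getVert c.length = c.getVert j := by
        rw [SimpleGraph.Walk.getVert_length, ← hij, SimpleGraph.Walk.getVert_zero]
      have := key c.length (by have := hc.three_le_length; omega) le_rfl j hjp (by omega) this
      omega
  · rcases Nat.eq_zero_or_pos j with hj0 | hjp
    · subst hj0
      have : c.getVert i = c.getVert c.length := by
        rw [SimpleGraph.Walk.getVert_length, hij, SimpleGraph.Walk.getVert_zero]
      have := key i hip (by omega) c.length (by have := hc.three_le_length; omega) le_rfl this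
      omega
    · exact key i hip (by omega) j hjp (by omega) hij


lemma zmod_closed {m : ℕ} [NeZero m] (K : Finset (ZMod m)) (hne : K.Nonempty)
    (hcl : ∀ a ∈ K, a - 1 ∈ K) : K = Finset.univ := by
  obtain ⟨k₀, hk₀⟩ := hne
  have hstep : ∀ n : ℕ, k₀ - (n : ZMod m) ∈ K := by
    intro n
    induction n with
    | zero => simpa using hk₀
    | succ p ih =>
      have := hcl _ ih
      have he : k₀ - (↑(p+1) : ZMod m) = k₀ - (p : ZMod m) - 1 := by push_cast; ring
      rwa [he]
  apply Finset.eq_univ_of_forall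
  intro z
  have := hstep ((k₀ - z).val)
  rwa [ZMod.natCast_rightInverse (k₀ - z) , sub_sub_cancel] at this

lemma exists_mono_inj {V : Type} [Fintype V] {A : V → V → Prop} (hac : DigraphAcyclic A) :
    ∃ g : V → ℕ, Function.Injective g ∧ ∀ u v, A u v → g u < g v := by
  classical
  rcases isEmpty_or_nonempty V with hV | hV
  · exact ⟨fun v => 0, Function.injective_of_subsingleton _, fun u v _ => (IsEmpty.false u).elim⟩
  set g0 : V → ℕ := fun v => (Finset.univ.filter (fun u => Relation.TransGen A u v)).card with hg0
  have hmono : ∀ u v, A u v → g0 u < g0 v := by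
    intro u v huv
    apply Finset.card_lt_card
    constructor
    · intro w hw
      simp only [Finset.mem_filter, Finset.mem_univ, true_and] at hw ⊢
      exact hw.trans (Relation.TransGen.single huv)
    · intro hsub
      have hu : u ∈ Finset.univ.filter (fun w => Relation.TransGen A w v) := by
        simp only [Finset.mem_filter, Finset.mem_univ, true_and]
        exact Relation.TransGen.single huv
      have := hsub hu
      simp only [Finset.mem_filter, Finset.mem_univ, true_and] at this
      exact hac u this
  set N : ℕ := Fintype.card V with hN
  have hNpos : 0 < N := Fintype.card_pos
  set e : V → ℕ := fun v => (Fintype.equivFin V v).val with he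
  have heN : ∀ v, e v < N := fun v => (Fintype.equivFin V v).isLt
  refine ⟨fun v => g0 v * N + e v, ?_, ?_⟩
  · intro u v huv
    simp only at huv
    have h1 : g0 u = g0 v := by
      rcases lt_trichotomy (g0 u) (g0 v) with h | h | h
      · exfalso
        have : g0 u * N + e u < g0 v * N + e v := by
          calc g0 u * N + e u < g0 u * N + N := by have := heN u; omega
          _ = (g0 u + 1) * N := by ring
          _ ≤ g0 v * N := Nat.mul_le_mul_right N h
          _ ≤ g0 v * N + e v := Nat.le_add_right _ _
        omega
      · exact h
      · exfalso
        have : g0 v * N + e v < g0 u * N + e u := by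
          calc g0 v * N + e v < g0 v * N + N := by have := heN v; omega
          _ = (g0 v + 1) * N := by ring
          _ ≤ g0 u * N := Nat.mul_le_mul_right N h
          _ ≤ g0 u * N + e u := Nat.le_add_right _ _
        omega
    have h2 : e u = e v := by rw [h1] at huv; omega
    exact (Fintype.equivFin V).injective (Fin.ext h2)
  · intro u v huv
    have h := hmono u v huv
    calc g0 u * N + e u < g0 u * N + N := by have := heN u; omega
    _ = (g0 u + 1) * N := by ring
    _ ≤ g0 v * N := Nat.mul_le_mul_right N h
    _ ≤ g0 v * N + e v := Nat.le_add_right _ _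

lemma main_lemma {V : Type} [Fintype V] {A : V → V → Prop} (hA : IsTwoTwoAcyclic A)
    {m : ℕ} (hm3 : 3 ≤ m) (f : ZMod m → V) (hfinj : Function.Injective f)
    (hadj : ∀ k : ZMod m, (CCE A).Adj (f k) (f (k+1))) :
    m + 3 ≤ ({w | w ∉ Set.range f ∧ ∃ u ∈ Set.range f, A u w} ∪
              {w | w ∉ Set.range f ∧ ∃ u ∈ Set.range f, A w u}).ncard ∧
    ({w | w ∉ Set.range f ∧ ∃ u ∈ Set.range f, A u w} ∩
      {w | w ∉ Set.range f ∧ ∃ u ∈ Set.range f, A w u}).ncard ≤ m - 3 := by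
  classical
  haveI : NeZero m := ⟨by omega⟩
  obtain ⟨⟨hloop, hout2, hin2⟩, hac⟩ := hA
  obtain ⟨g, hginj, hgmono⟩ := exists_mono_inj hac
  -- basic ZMod facts
  have h10 : (1 : ZMod m) ≠ 0 := by
    intro h
    rw [show (1 : ZMod m) = ((1 : ℕ) : ZMod m) by norm_num,
      ZMod.natCast_eq_zero_iff] at h
    have := Nat.le_of_dvd one_pos h
    omega
  have h20 : (2 : ZMod m) ≠ 0 := by
    intro h
    rw [show (2 : ZMod m) = ((2 : ℕ) : ZMod m) by norm_num,
      ZMod.natCast_eq_zero_iff] at h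
    have := Nat.le_of_dvd two_pos h
    omega
  have hne1 : ∀ k : ZMod m, k ≠ k + 1 := by
    intro k h
    apply h10
    have : k + 1 - k = k - k := by rw [← h]
    simpa using this
  have hne2 : ∀ k : ZMod m, k ≠ k + 2 := by
    intro k h
    apply h20
    have : k + 2 - k = k - k := by rw [← h]
    simpa using this
  have hsub1 : ∀ k : ZMod m, k - 1 ≠ k := by
    intro k h
    apply h10
    rw [← sub_sub_cancel k 1, h, sub_self]
  -- choose common out-neighbors x and in-neighbors y
  choose x hx1 hx2 using fun k : ZMod m => (hadj k).2.1
  choose y hy1 hy2 using fun k : ZMod m => (hadj k).2.2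
  have hfne : ∀ k : ZMod m, f k ≠ f (k+1) := fun k => (hadj k).1
  -- x is injective
  have hxinj : Function.Injective x := by
    intro k k' h
    by_contra hkk
    have h1 : f k = f k' ∨ f (k+1) = f k' := by
      rcases hin2 (x k) (f k) (f (k+1)) (f k') (hx1 k) (hx2 k) (h ▸ hx1 k') with
        h' | h' | h'
      · exact absurd (hfinj h') (hne1 k)
      · exact Or.inl h'
      · exact Or.inr h'
    have h2 : f k = f (k'+1) ∨ f (k+1) = f (k'+1) := by
      rcases hin2 (x k) (f k) (f (k+1)) (f (k'+1)) (hx1 k) (hx2 k) (h ▸ hx2 k') with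
        h' | h' | h'
      · exact absurd (hfinj h') (hne1 k)
      · exact Or.inl h'
      · exact Or.inr h'
    rcases h1 with h1 | h1
    · exact hkk (hfinj h1)
    · have hk1 : k + 1 = k' := hfinj h1
      rcases h2 with h2 | h2
      · have hk2 : k = k' + 1 := hfinj h2
        exact hne2 k (by linear_combination hk2 - hk1)
      · exact hkk (add_right_cancel (hfinj h2))
  have hyinj : Function.Injective y := by
    intro k k' h
    by_contra hkk
    have h1 : f k = f k' ∨ f (k+1) = f k' := by
      rcases hout2 (y k) (f k) (f (k+1)) (f k') (hy1 k) (hy2 k) (h ▸ hy1 k') with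
        h' | h' | h'
      · exact absurd (hfinj h') (hne1 k)
      · exact Or.inl h'
      · exact Or.inr h'
    have h2 : f k = f (k'+1) ∨ f (k+1) = f (k'+1) := by
      rcases hout2 (y k) (f k) (f (k+1)) (f (k'+1)) (hy1 k) (hy2 k) (h ▸ hy2 k') with
        h' | h' | h'
      · exact absurd (hfinj h') (hne1 k)
      · exact Or.inl h'
      · exact Or.inr h'
    rcases h1 with h1 | h1
    · exact hkk (hfinj h1)
    · have hk1 : k + 1 = k' := hfinj h1
      rcases h2 with h2 | h2
      · have hk2 : k = k' + 1 := hfinj h2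
        exact hne2 k (by linear_combination hk2 - hk1)
      · exact hkk (add_right_cancel (hfinj h2))
  -- arcs out of / into the cycle are exactly the x's and y's
  have hxk1 : ∀ k : ZMod m, A (f k) (x (k-1)) := by
    intro k
    have := hx2 (k-1)
    rwa [sub_add_cancel] at this
  have hyk1 : ∀ k : ZMod m, A (y (k-1)) (f k) := by
    intro k
    have := hy2 (k-1)
    rwa [sub_add_cancel] at this
  have hxne : ∀ k : ZMod m, x (k-1) ≠ x k := fun k h => hsub1 k (hxinj h)
  have hyne : ∀ k : ZMod m, y (k-1) ≠ y k := fun k h => hsub1 k (hyinj h)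
  have hout : ∀ (k : ZMod m) (w : V), A (f k) w → w = x (k-1) ∨ w = x k := by
    intro k w hw
    rcases hout2 (f k) w (x (k-1)) (x k) hw (hxk1 k) (hx1 k) with h | h | h
    · exact Or.inl h
    · exact Or.inr h
    · exact absurd h (hxne k)
  have hin : ∀ (k : ZMod m) (w : V), A w (f k) → w = y (k-1) ∨ w = y k := by
    intro k w hw
    rcases hin2 (f k) w (y (k-1)) (y k) hw (hyk1 k) (hy1 k) with h | h | h
    · exact Or.inl h
    · exact Or.inr h
    · exact absurd h (hyne k)
  -- the sets of cycle-indices whose x (resp. y) hits the cycle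
  set S : Finset (ZMod m) := Finset.univ.filter (fun k => ∃ l, f l = x k) with hSdef
  set T : Finset (ZMod m) := Finset.univ.filter (fun k => ∃ l, f l = y k) with hTdef
  set lx : ZMod m → ZMod m := fun k => if h : ∃ l, f l = x k then h.choose else 0 with hlxdef
  set ly : ZMod m → ZMod m := fun k => if h : ∃ l, f l = y k then h.choose else 0 with hlydef
  have hlx : ∀ k ∈ S, f (lx k) = x k := by
    intro k hk
    rw [hSdef, Finset.mem_filter] at hk
    simp only [hlxdef, dif_pos hk.2]
    exact hk.2.choose_spec
  have hly : ∀ k ∈ T, f (ly k) = y k := by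
    intro k hk
    rw [hTdef, Finset.mem_filter] at hk
    simp only [hlydef, dif_pos hk.2]
    exact hk.2.choose_spec
  have claimA : ∀ k ∈ S, lx k ∈ T ∧ lx k - 1 ∈ T := by
    intro k hk
    have hfl : f (lx k) = x k := hlx k hk
    have ha1 : A (f k) (f (lx k)) := hfl ▸ hx1 k
    have ha2 : A (f (k+1)) (f (lx k)) := hfl ▸ hx2 k
    have hT1 : ∀ j : ZMod m, (∃ l, f l = y j) → j ∈ T := by
      intro j hj
      rw [hTdef, Finset.mem_filter]
      exact ⟨Finset.mem_univ j, hj⟩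
    rcases hin (lx k) (f k) ha1 with h1 | h1 <;>
      rcases hin (lx k) (f (k+1)) ha2 with h2 | h2
    · exact absurd (h1.trans h2.symm) (hfne k)
    · exact ⟨hT1 _ ⟨k+1, h2⟩, hT1 _ ⟨k, h1⟩⟩
    · exact ⟨hT1 _ ⟨k, h1⟩, hT1 _ ⟨k+1, h2⟩⟩
    · exact absurd (h1.trans h2.symm) (hfne k)
  have claimB : ∀ j ∈ T, ly j ∈ S ∧ ly j - 1 ∈ S := by
    intro j hj
    have hfl : f (ly j) = y j := hly j hj
    have ha1 : A (f (ly j)) (f j) := hfl ▸ hy1 j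
    have ha2 : A (f (ly j)) (f (j+1)) := hfl ▸ hy2 j
    have hS1 : ∀ k : ZMod m, (∃ l, f l = x k) → k ∈ S := by
      intro k hk
      rw [hSdef, Finset.mem_filter]
      exact ⟨Finset.mem_univ k, hk⟩
    rcases hout (ly j) (f j) ha1 with h1 | h1 <;>
      rcases hout (ly j) (f (j+1)) ha2 with h2 | h2
    · exact absurd (h1.trans h2.symm) (hfne j)
    · exact ⟨hS1 _ ⟨j+1, h2⟩, hS1 _ ⟨j, h1⟩⟩
    · exact ⟨hS1 _ ⟨j, h1⟩, hS1 _ ⟨j+1, h2⟩⟩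
    · exact absurd (h1.trans h2.symm) (hfne j)
  -- neither S nor T is everything
  have hSnotuniv : S ≠ Finset.univ := by
    intro hSu
    obtain ⟨M, _, hM⟩ := Finset.exists_max_image (Finset.univ : Finset (ZMod m))
      (fun k => g (f k)) ⟨0, Finset.mem_univ 0⟩
    have hMS : M ∈ S := hSu ▸ Finset.mem_univ M
    have harc : A (f M) (f (lx M)) := (hlx M hMS) ▸ hx1 M
    exact absurd (hM (lx M) (Finset.mem_univ _)) (not_le.mpr (hgmono _ _ harc))
  have hTnotuniv : T ≠ Finset.univ := by
    intro hTu
    obtain ⟨M, _, hM⟩ := Finset.exists_min_image (Finset.univ : Finset (ZMod m))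
      (fun k => g (f k)) ⟨0, Finset.mem_univ 0⟩
    have hMT : M ∈ T := hTu ▸ Finset.mem_univ M
    have harc : A (f (ly M)) (f M) := (hly M hMT) ▸ hy1 M
    exact absurd (hM (ly M) (Finset.mem_univ _)) (not_le.mpr (hgmono _ _ harc))
  -- counting: a nonempty S forces |T| ≥ |S| + 1 and vice versa
  have hST : S.Nonempty → S.card + 1 ≤ T.card := by
    intro hSne
    have hlxinjS : Set.InjOn lx S := by
      intro a ha b hb hab
      apply hxinj
      rw [← hlx a ha, ← hlx b hb, hab]
    set K : Finset (ZMod m) := S.image lx with hKdef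
    have hKcard : K.card = S.card := Finset.card_image_of_injOn hlxinjS
    have hKT : K ⊆ T := by
      intro a ha
      rw [hKdef, Finset.mem_image] at ha
      obtain ⟨k, hk, rfl⟩ := ha
      exact (claimA k hk).1
    have hKT1 : ∀ a ∈ K, a - 1 ∈ T := by
      intro a ha
      rw [hKdef, Finset.mem_image] at ha
      obtain ⟨k, hk, rfl⟩ := ha
      exact (claimA k hk).2
    by_cases hcl : ∀ a ∈ K, a - 1 ∈ K
    · exfalso
      have hKuniv : K = Finset.univ :=
        zmod_closed K (hSne.image lx) hcl
      exact hTnotuniv (Finset.eq_univ_of_forall fun a => hKT (hKuniv ▸ Finset.mem_univ a))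
    · push_neg at hcl
      obtain ⟨a, haK, ha1K⟩ := hcl
      have hsub : insert (a - 1) K ⊆ T := by
        intro b hb
        rcases Finset.mem_insert.mp hb with rfl | hb
        · exact hKT1 a haK
        · exact hKT hb
      calc S.card + 1 = K.card + 1 := by rw [hKcard]
        _ = (insert (a-1) K).card := (Finset.card_insert_of_notMem ha1K).symm
        _ ≤ T.card := Finset.card_le_card hsub
  have hTS : T.Nonempty → T.card + 1 ≤ S.card := by
    intro hTne
    have hlyinjT : Set.InjOn ly T := by
      intro a ha b hb hab
      apply hyinj
      rw [← hly a ha, ← hly b hb, hab]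
    set K : Finset (ZMod m) := T.image ly with hKdef
    have hKcard : K.card = T.card := Finset.card_image_of_injOn hlyinjT
    have hKS : K ⊆ S := by
      intro a ha
      rw [hKdef, Finset.mem_image] at ha
      obtain ⟨k, hk, rfl⟩ := ha
      exact (claimB k hk).1
    have hKS1 : ∀ a ∈ K, a - 1 ∈ S := by
      intro a ha
      rw [hKdef, Finset.mem_image] at ha
      obtain ⟨k, hk, rfl⟩ := ha
      exact (claimB k hk).2
    by_cases hcl : ∀ a ∈ K, a - 1 ∈ K
    · exfalso
      have hKuniv : K = Finset.univ :=
        zmod_closed K (hTne.image ly) hcl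
      exact hSnotuniv (Finset.eq_univ_of_forall fun a => hKS (hKuniv ▸ Finset.mem_univ a))
    · push_neg at hcl
      obtain ⟨a, haK, ha1K⟩ := hcl
      have hsub : insert (a - 1) K ⊆ S := by
        intro b hb
        rcases Finset.mem_insert.mp hb with rfl | hb
        · exact hKS1 a haK
        · exact hKS hb
      calc T.card + 1 = K.card + 1 := by rw [hKcard]
        _ = (insert (a-1) K).card := (Finset.card_insert_of_notMem ha1K).symm
        _ ≤ S.card := Finset.card_le_card hsub
  have hSempty : ¬ S.Nonempty := by
    intro h
    have h1 := hST h
    have hTne : T.Nonempty := Finset.card_pos.mp (by omega)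
    have h2 := hTS hTne
    omega
  have hTempty : ¬ T.Nonempty := by
    intro h
    have h2 := hTS h
    have hSne : S.Nonempty := Finset.card_pos.mp (by omega)
    exact hSempty hSne
  have hxnot : ∀ k : ZMod m, x k ∉ Set.range f := by
    intro k hk
    exact hSempty ⟨k, by rw [hSdef, Finset.mem_filter]; exact ⟨Finset.mem_univ k, hk⟩⟩
  have hynot : ∀ k : ZMod m, y k ∉ Set.range f := by
    intro k hk
    exact hTempty ⟨k, by rw [hTdef, Finset.mem_filter]; exact ⟨Finset.mem_univ k, hk⟩⟩
  -- identify the neighbor sets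
  have hXeq : {w | w ∉ Set.range f ∧ ∃ u ∈ Set.range f, A u w} = Set.range x := by
    ext w
    constructor
    · rintro ⟨hw, u, ⟨k, rfl⟩, hu⟩
      rcases hout k w hu with h | h
      · exact ⟨k-1, h.symm⟩
      · exact ⟨k, h.symm⟩
    · rintro ⟨k, rfl⟩
      exact ⟨hxnot k, f k, ⟨k, rfl⟩, hx1 k⟩
  have hYeq : {w | w ∉ Set.range f ∧ ∃ u ∈ Set.range f, A w u} = Set.range y := by
    ext w
    constructor
    · rintro ⟨hw, u, ⟨k, rfl⟩, hu⟩
      rcases hin k w hu with h | h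
      · exact ⟨k-1, h.symm⟩
      · exact ⟨k, h.symm⟩
    · rintro ⟨k, rfl⟩
      exact ⟨hynot k, f k, ⟨k, rfl⟩, hy1 k⟩
  have hcardZ : Fintype.card (ZMod m) = m := ZMod.card m
  have hXcard : (Set.range x).ncard = m := by
    rw [← Nat.card_coe_set_eq, Nat.card_range_of_injective hxinj, Nat.card_zmod]
  have hYcard : (Set.range y).ncard = m := by
    rw [← Nat.card_coe_set_eq, Nat.card_range_of_injective hyinj, Nat.card_zmod]
  -- the max and second-max indices
  obtain ⟨Mx, _, hMx⟩ := Finset.exists_max_image (Finset.univ : Finset (ZMod m))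
    (fun k => g (f k)) ⟨0, Finset.mem_univ 0⟩
  have herase : ((Finset.univ : Finset (ZMod m)).erase Mx).Nonempty := by
    rw [← Finset.card_pos, Finset.card_erase_of_mem (Finset.mem_univ _), Finset.card_univ,
      hcardZ]
    omega
  obtain ⟨M', hM'mem, hM'⟩ := Finset.exists_max_image _ (fun k => g (f k)) herase
  have hM'ne : M' ≠ Mx := (Finset.mem_erase.mp hM'mem).1
  have hsecond : ∀ a : ZMod m, a ≠ Mx → g (f a) ≤ g (f M') := fun a ha =>
    hM' a (Finset.mem_erase.mpr ⟨ha, Finset.mem_univ a⟩)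
  have hMxtop : ∀ a : ZMod m, g (f a) ≤ g (f Mx) := fun a => hMx a (Finset.mem_univ a)
  -- the "forbidden" third index
  set w0 : ZMod m := if Mx - 1 = M' then M' - 1 else Mx - 1 with hw0def
  set B : Finset (ZMod m) := {Mx, M', w0} with hBdef
  have hMxw0 : Mx ≠ w0 := by
    rw [hw0def]
    split_ifs with hcase
    · intro h
      apply h20
      have h2' : Mx - 2 = Mx := by
        calc Mx - 2 = Mx - 1 - 1 := by ring
        _ = M' - 1 := by rw [hcase]
        _ = Mx := h.symm
      rw [← sub_sub_cancel Mx 2, h2', sub_self]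
    · intro h
      exact hsub1 Mx h.symm
  have hM'w0 : M' ≠ w0 := by
    rw [hw0def]
    split_ifs with hcase
    · intro h
      exact hsub1 M' h.symm
    · intro h
      exact hcase h.symm
  have hBcard : B.card = 3 := by
    rw [hBdef]
    rw [Finset.card_insert_of_notMem, Finset.card_insert_of_notMem, Finset.card_singleton]
    · simp only [Finset.mem_singleton]
      exact hM'w0
    · simp only [Finset.mem_insert, Finset.mem_singleton]
      push_neg
      exact ⟨hM'ne.symm, hMxw0⟩
  -- every common x-y vertex avoids B via its x-index
  set φ : V → ZMod m := fun z => if h : ∃ k, x k = z then h.choose else 0 with hφdef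
  have hφspec : ∀ z ∈ Set.range x, x (φ z) = z := by
    rintro z ⟨k, rfl⟩
    have h : ∃ k', x k' = x k := ⟨k, rfl⟩
    simp only [hφdef, dif_pos h]
    exact h.choose_spec
  have hkey : ∀ z ∈ Set.range x ∩ Set.range y, φ z ∈ ((Finset.univ \ B : Finset (ZMod m)) :
      Set (ZMod m)) := by
    rintro z ⟨hzX, hzY⟩
    obtain ⟨j, hj⟩ := hzY
    have hxz : x (φ z) = z := hφspec z hzX
    have e1 : g (f (φ z)) < g (f j) :=
      (hgmono _ _ (hxz ▸ hx1 (φ z))).trans (hgmono _ _ (hj ▸ hy1 j))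
    have e2 : g (f (φ z)) < g (f (j+1)) :=
      (hgmono _ _ (hxz ▸ hx1 (φ z))).trans (hgmono _ _ (hj ▸ hy2 j))
    have e3 : g (f (φ z + 1)) < g (f j) :=
      (hgmono _ _ (hxz ▸ hx2 (φ z))).trans (hgmono _ _ (hj ▸ hy1 j))
    have e4 : g (f (φ z + 1)) < g (f (j+1)) :=
      (hgmono _ _ (hxz ▸ hx2 (φ z))).trans (hgmono _ _ (hj ▸ hy2 j))
    have hne_Mx : φ z ≠ Mx := by
      intro h
      rw [h] at e1
      exact absurd (hMxtop j) (not_le.mpr e1)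
    have hne_Mx1 : φ z + 1 ≠ Mx := by
      intro h
      rw [h] at e3
      exact absurd (hMxtop j) (not_le.mpr e3)
    have hne_M' : φ z ≠ M' := by
      intro h
      rw [h] at e1 e2
      by_cases hjM : j = Mx
      · have hj1 : j + 1 ≠ Mx := fun hh => hne1 j (hjM.trans hh.symm)
        exact absurd (hsecond _ hj1) (not_le.mpr e2)
      · exact absurd (hsecond _ hjM) (not_le.mpr e1)
    have hne_M'1 : φ z + 1 ≠ M' := by
      intro h
      rw [h] at e3 e4
      by_cases hjM : j = Mx
      · have hj1 : j + 1 ≠ Mx := fun hh => hne1 j (hjM.trans hh.symm)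
        exact absurd (hsecond _ hj1) (not_le.mpr e4)
      · exact absurd (hsecond _ hjM) (not_le.mpr e3)
    have hne_w0 : φ z ≠ w0 := by
      rw [hw0def]
      split_ifs with hcase
      · intro h
        exact hne_M'1 (by rw [h, sub_add_cancel])
      · intro h
        exact hne_Mx1 (by rw [h, sub_add_cancel])
    simp only [Finset.coe_sdiff, Finset.coe_univ, Set.mem_diff, Set.mem_univ, true_and,
      Finset.mem_coe, hBdef, Finset.mem_insert, Finset.mem_singleton]
    push_neg
    exact ⟨hne_Mx, hne_M', hne_w0⟩
  have hφinj : Set.InjOn φ (Set.range x ∩ Set.range y) := by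
    intro a ha b hb hab
    rw [← hφspec a ha.1, ← hφspec b hb.1, hab]
  have hint : (Set.range x ∩ Set.range y).ncard ≤ m - 3 := by
    have := Set.ncard_le_ncard_of_injOn φ hkey hφinj (Set.toFinite _)
    rwa [Set.ncard_coe_finset, Finset.card_sdiff_of_subset (Finset.subset_univ B), Finset.card_univ,
      hcardZ, hBcard] at this
  have huni := Set.ncard_union_add_ncard_inter (Set.range x) (Set.range y)
    (Set.toFinite _) (Set.toFinite _)
  rw [hXeq, hYeq]
  refine ⟨?_, hint⟩
  omega

end AuxProofs

theorem stmt15 {V : Type} [Fintype V] (A : V → V → Prop) (hA : IsTwoTwoAcyclic A)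
    {v : V} (c : (CCE A).Walk v v) (hc : c.IsCycle) (m : ℕ) (hm : c.length = m)
    (hm3 : 3 ≤ m) :
    m + 3 ≤ ({w | w ∉ c.support ∧ ∃ x ∈ c.support, A x w} ∪
              {w | w ∉ c.support ∧ ∃ x ∈ c.support, A w x}).ncard ∧
    ({w | w ∉ c.support ∧ ∃ x ∈ c.support, A x w} ∩
      {w | w ∉ c.support ∧ ∃ x ∈ c.support, A w x}).ncard ≤ m - 3 := by
  classical
  haveI : NeZero m := ⟨by omega⟩
  subst hm
  set m := c.length with hmdef
  set f : ZMod m → V := fun k => c.getVert k.val with hfdef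
  have hval : ∀ k : ZMod m, k.val < m := fun k => ZMod.val_lt k
  have hfs : ∀ k : ZMod m, f (k+1) = c.getVert (k.val + 1) := by
    intro k
    have h1 : k + 1 = ((k.val + 1 : ℕ) : ZMod m) := by
      push_cast
      rw [ZMod.natCast_rightInverse k]
    rw [hfdef]
    simp only
    rw [h1, ZMod.val_natCast]
    rcases Nat.lt_or_ge (k.val + 1) m with h | h
    · rw [Nat.mod_eq_of_lt h]
    · have hkm : k.val + 1 = m := by have := hval k; omega
      rw [hkm, Nat.mod_self, ← hkm]
      rw [show c.getVert (k.val + 1) = v by rw [hkm]; exact c.getVert_length]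
      exact c.getVert_zero
  have hfinj : Function.Injective f := by
    intro k k' h
    have := cycle_getVert_inj hc (hval k) (hval k') h
    have hk : ((k.val : ℕ) : ZMod m) = ((k'.val : ℕ) : ZMod m) := by rw [this]
    rwa [ZMod.natCast_rightInverse k, ZMod.natCast_rightInverse k'] at hk
  have hadjf : ∀ k : ZMod m, (CCE A).Adj (f k) (f (k+1)) := by
    intro k
    rw [hfs k]
    exact c.adj_getVert_succ (hval k)
  have hsupp : ∀ w, w ∈ c.support ↔ w ∈ Set.range f := by
    intro w
    rw [SimpleGraph.Walk.mem_support_iff_exists_getVert]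
    constructor
    · rintro ⟨n, rfl, hn⟩
      rcases Nat.lt_or_ge n m with h | h
      · exact ⟨(n : ZMod m), by rw [hfdef]; simp only; rw [ZMod.val_natCast, Nat.mod_eq_of_lt h]⟩
      · have hnm : n = m := by omega
        refine ⟨0, ?_⟩
        rw [hfdef]
        simp only [ZMod.val_zero, hnm]
        rw [c.getVert_zero, c.getVert_length]
    · rintro ⟨k, rfl⟩
      exact ⟨k.val, rfl, (hval k).le⟩
  have e1 : {w | w ∉ c.support ∧ ∃ x ∈ c.support, A x w} =
      {w | w ∉ Set.range f ∧ ∃ u ∈ Set.range f, A u w} := by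
    ext w
    constructor
    · rintro ⟨h1, u, hu, h2⟩
      exact ⟨fun hh => h1 ((hsupp w).mpr hh), u, (hsupp u).mp hu, h2⟩
    · rintro ⟨h1, u, hu, h2⟩
      exact ⟨fun hh => h1 ((hsupp w).mp hh), u, (hsupp u).mpr hu, h2⟩
  have e2 : {w | w ∉ c.support ∧ ∃ x ∈ c.support, A w x} =
      {w | w ∉ Set.range f ∧ ∃ u ∈ Set.range f, A w u} := by
    ext w
    constructor
    · rintro ⟨h1, u, hu, h2⟩
      exact ⟨fun hh => h1 ((hsupp w).mpr hh), u, (hsupp u).mp hu, h2⟩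
    · rintro ⟨h1, u, hu, h2⟩
      exact ⟨fun hh => h1 ((hsupp w).mp hh), u, (hsupp u).mpr hu, h2⟩
  rw [e1, e2]
  exact main_lemma hA hm3 f hfinj hadjf
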